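/- arXiv:0907.2047 — 2 statements merged into one kernel-verified Lean document; each statement's English description precedes it below -/
import Mathlib

section
/- The loop T_L satisfies the alternative laws x·(x·y) = (x·x)·y and (x·y)·y = x·(y·y), the flexible law x·(y·x) = (x·y)·x, and the C-loop identity x·(y·(y·z)) = ((x·y)·y)·z, for all x, y, z ∈ T_L. -/
/-- Iterated Cayley–Dickson doubling starting from `ℝ`. -/
def CD : ℕ → Type
  | 0 => ℝ
  | n + 1 => CD n × CD n

instance cdAddCommGroup : ∀ n, AddCommGroup (CD n)
  | 0 => inferInstanceAs (AddCommGroup ℝ)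
  | n + 1 => letI := cdAddCommGroup n; inferInstanceAs (AddCommGroup (CD n × CD n))

noncomputable instance cdModule : ∀ n, Module ℝ (CD n)
  | 0 => inferInstanceAs (Module ℝ ℝ)
  | n + 1 => letI := cdModule n; inferInstanceAs (Module ℝ (CD n × CD n))

/-- Cayley–Dickson conjugation, starting from the identity on `ℝ`. -/
def cdConj : ∀ n, CD n → CD n
  | 0, x => x
  | n + 1, x => (cdConj n x.1, -x.2)

/-- Cayley–Dickson multiplication: `(a,b)(c,d) = (ac − d b̄, ā d + c b)`. -/
def cdMul : ∀ n, CD n → CD n → CD n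
  | 0, x, y => @Mul.mul ℝ _ x y
  | n + 1, x, y =>
      (cdMul n x.1 y.1 - cdMul n y.2 (cdConj n x.2),
       cdMul n (cdConj n x.1) y.2 + cdMul n y.1 x.2)

instance cdMulInst (n : ℕ) : Mul (CD n) := ⟨cdMul n⟩

instance cdOne : ∀ n, One (CD n)
  | 0 => ⟨(1 : ℝ)⟩
  | n + 1 => letI := cdOne n; ⟨((1 : CD n), 0)⟩

/-- The standard basis elements: under a doubling step `A → A × A`, a basis element
`e k` of `A` gives `e k = (e k, 0)` and `e (k + dim A) = (0, e k)`. -/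
def cdE : ∀ n, ℕ → CD n
  | 0, _ => (1 : ℝ)
  | n + 1, k => if k < 2 ^ n then (cdE n k, 0) else (0, cdE n (k - 2 ^ n))

/-- The trigintaduonions: the 32-dimensional real Cayley–Dickson algebra. -/
abbrev TT := CD 5

/-- The 32 standard basis elements `e 0 = 1, e 1, …, e 31` of `𝕋`. -/
def e (i : ℕ) : TT := cdE 5 i

/-- The trigintaduonion loop `T_L = {±e 0, ±e 1, …, ±e 31}`. -/
def TL : Set TT := {x | ∃ i < 32, x = e i ∨ x = -e i}

/-- A subloop of `T_L`: a nonempty subset of `T_L` closed under multiplication. -/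
def IsSubloop (N : Set TT) : Prop :=
  N ⊆ TL ∧ N.Nonempty ∧ ∀ x ∈ N, ∀ y ∈ N, x * y ∈ N

/-- Two subsets of `T_L` are isomorphic (as loops) if some bijection between them
preserves multiplication. -/
def LoopIso (A B : Set TT) : Prop :=
  ∃ f : TT → TT, Set.BijOn f A B ∧ ∀ x ∈ A, ∀ y ∈ A, f (x * y) = f x * f y


lemma cdConj_zero : ∀ n, cdConj n (0 : CD n) = 0
  | 0 => rfl
  | n+1 => by
      show ((cdConj n (0 : CD n), -(0 : CD n)) : CD n × CD n) = 0
      simp [cdConj_zero n]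

lemma cdConj_neg : ∀ n (x : CD n), cdConj n (-x) = -cdConj n x
  | 0, x => rfl
  | n+1, x => by
      show ((cdConj n (-x).1, -(-x).2) : CD n × CD n) = -(cdConj n x.1, -x.2)
      have h1 : (-x : CD (n+1)).1 = -x.1 := rfl
      have h2 : (-x : CD (n+1)).2 = -x.2 := rfl
      rw [h1, h2, cdConj_neg n]
      rfl

lemma cdMul_zero : ∀ n, (∀ y : CD n, cdMul n 0 y = 0) ∧ (∀ x : CD n, cdMul n x 0 = 0)
  | 0 => ⟨fun y => zero_mul (M₀ := ℝ) y, fun x => mul_zero (M₀ := ℝ) x⟩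
  | n+1 => by
    obtain ⟨hz, hm⟩ := cdMul_zero n
    have h1 : ((0:CD (n+1)).1 : CD n) = 0 := rfl
    have h2 : ((0:CD (n+1)).2 : CD n) = 0 := rfl
    constructor
    · intro y
      show ((cdMul n (0:CD (n+1)).1 y.1 - cdMul n y.2 (cdConj n (0:CD (n+1)).2),
        cdMul n (cdConj n (0:CD (n+1)).1) y.2 + cdMul n y.1 (0:CD (n+1)).2) : CD n × CD n) = 0
      rw [h1, h2, cdConj_zero]
      simp [hz, hm]
    · intro x
      show ((cdMul n x.1 (0:CD (n+1)).1 - cdMul n (0:CD (n+1)).2 (cdConj n x.2),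
        cdMul n (cdConj n x.1) (0:CD (n+1)).2 + cdMul n (0:CD (n+1)).1 x.2) : CD n × CD n) = 0
      rw [h1, h2]
      simp [hz, hm]

lemma cdMul_neg : ∀ n, (∀ x y : CD n, cdMul n (-x) y = -cdMul n x y) ∧
    (∀ x y : CD n, cdMul n x (-y) = -cdMul n x y)
  | 0 => ⟨fun x y => neg_mul (α := ℝ) x y, fun x y => mul_neg (α := ℝ) x y⟩
  | n+1 => by
    obtain ⟨hl, hr⟩ := cdMul_neg n
    constructor
    · intro x y
      show ((cdMul n (-x).1 y.1 - cdMul n y.2 (cdConj n (-x).2),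
        cdMul n (cdConj n (-x).1) y.2 + cdMul n y.1 (-x).2) : CD n × CD n)
        = -(cdMul n x.1 y.1 - cdMul n y.2 (cdConj n x.2),
            cdMul n (cdConj n x.1) y.2 + cdMul n y.1 x.2)
      have e1 : ((-x : CD (n+1)).1 : CD n) = -x.1 := rfl
      have e2 : ((-x : CD (n+1)).2 : CD n) = -x.2 := rfl
      rw [e1, e2, cdConj_neg, cdConj_neg, hl, hr, hl, hr]
      show _ = ((-(cdMul n x.1 y.1 - cdMul n y.2 (cdConj n x.2)),
        -(cdMul n (cdConj n x.1) y.2 + cdMul n y.1 x.2)) : CD n × CD n)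
      congr 1 <;> abel
    · intro x y
      show ((cdMul n x.1 (-y).1 - cdMul n (-y).2 (cdConj n x.2),
        cdMul n (cdConj n x.1) (-y).2 + cdMul n (-y).1 x.2) : CD n × CD n)
        = -(cdMul n x.1 y.1 - cdMul n y.2 (cdConj n x.2),
            cdMul n (cdConj n x.1) y.2 + cdMul n y.1 x.2)
      have e1 : ((-y : CD (n+1)).1 : CD n) = -y.1 := rfl
      have e2 : ((-y : CD (n+1)).2 : CD n) = -y.2 := rfl
      rw [e1, e2, hr, hl, hr, hl]
      show _ = ((-(cdMul n x.1 y.1 - cdMul n y.2 (cdConj n x.2)),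
        -(cdMul n (cdConj n x.1) y.2 + cdMul n y.1 x.2)) : CD n × CD n)
      congr 1 <;> abel

/-- apply a sign -/
def sg {α : Type} [Neg α] (b : Bool) (x : α) : α := cond b x (-x)

@[simp] lemma sg_true {α : Type} [Neg α] (x : α) : sg true x = x := rfl
@[simp] lemma sg_false {α : Type} [Neg α] (x : α) : sg false x = -x := rfl

lemma sg_sg {n : ℕ} (a b : Bool) (x : CD n) : sg a (sg b x) = sg (a == b) x := by
  cases a <;> cases b <;> simp

lemma cdMul_sg_left (n : ℕ) (a : Bool) (x y : CD n) :
    cdMul n (sg a x) y = sg a (cdMul n x y) := by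
  cases a <;> simp [(cdMul_neg n).1]

lemma cdMul_sg_right (n : ℕ) (a : Bool) (x y : CD n) :
    cdMul n x (sg a y) = sg a (cdMul n x y) := by
  cases a <;> simp [(cdMul_neg n).2]

lemma sg_pair (n : ℕ) (a : Bool) (x y : CD n) :
    ((sg a x, sg a y) : CD n × CD n) = sg a (x, y) := by
  cases a <;> rfl

/-- sign of conjugation on basis elements -/
def csg : ℕ → ℕ → Bool
  | 0, _ => true
  | n+1, i => if i < 2^n then csg n i else false

/-- sign of product of basis elements -/
def msg : ℕ → ℕ → ℕ → Bool
  | 0, _, _ => true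
  | n+1, i, j =>
    if i < 2^n then
      if j < 2^n then msg n i j
      else (csg n i == msg n i (j - 2^n))
    else
      if j < 2^n then msg n j (i - 2^n)
      else !(csg n (i - 2^n) == msg n (j - 2^n) (i - 2^n))

/-- index of product of basis elements -/
def midx : ℕ → ℕ → ℕ → ℕ
  | 0, _, _ => 0
  | n+1, i, j =>
    if i < 2^n then
      if j < 2^n then midx n i j
      else 2^n + midx n i (j - 2^n)
    else
      if j < 2^n then 2^n + midx n j (i - 2^n)
      else midx n (j - 2^n) (i - 2^n)

lemma cdConj_e : ∀ n i, i < 2^n → cdConj n (cdE n i) = sg (csg n i) (cdE n i)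
  | 0, i, _ => rfl
  | n+1, i, hi => by
    by_cases h : i < 2^n
    · show ((cdConj n (cdE (n+1) i).1, -(cdE (n+1) i).2) : CD n × CD n) = _
      rw [show cdE (n+1) i = ((cdE n i, 0) : CD n × CD n) from by simp [cdE, h]; rfl]
      show ((cdConj n (cdE n i), -(0:CD n)) : CD n × CD n) = _
      rw [cdConj_e n i h, csg, if_pos h]
      cases csg n i
      · rfl
      · exact Prod.ext rfl (by simp; rfl)
    · show ((cdConj n (cdE (n+1) i).1, -(cdE (n+1) i).2) : CD n × CD n) = _
      rw [show cdE (n+1) i = ((0, cdE n (i - 2^n)) : CD n × CD n) from by simp [cdE, h]; rfl]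
      show ((cdConj n (0 : CD n), -(cdE n (i - 2^n))) : CD n × CD n) = _
      rw [cdConj_zero, csg, if_neg h]
      show _ = ((-(0:CD n), -(cdE n (i - 2^n))) : CD n × CD n)
      rw [neg_zero]

lemma neg_pair {n : ℕ} (a b : CD n) : -((a, b) : CD n × CD n) = (-a, -b) := rfl

lemma sg_zero {n : ℕ} (b : Bool) : sg b (0 : CD n) = 0 := by cases b <;> simp

lemma neg_sg {n : ℕ} (b : Bool) (x : CD n) : -(sg b x) = sg (!b) x := by
  cases b <;> simp

lemma cdMul_pair {n : ℕ} (a b c d : CD n) :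
    cdMul (n+1) ((a, b) : CD n × CD n) ((c, d) : CD n × CD n) =
      ((cdMul n a c - cdMul n d (cdConj n b),
        cdMul n (cdConj n a) d + cdMul n c b) : CD n × CD n) := rfl

lemma cdE_succ_lt {n k : ℕ} (h : k < 2^n) :
    cdE (n+1) k = ((cdE n k, 0) : CD n × CD n) := by rw [cdE]; exact if_pos h

lemma cdE_succ_ge {n k : ℕ} (h : ¬ k < 2^n) :
    cdE (n+1) k = ((0, cdE n (k - 2^n)) : CD n × CD n) := by rw [cdE]; exact if_neg h

lemma midx_lt : ∀ n i j, i < 2^n → j < 2^n → midx n i j < 2^n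
  | 0, _, _, _, _ => Nat.one_pos
  | n+1, i, j, hi, hj => by
    have hp : (2:ℕ)^(n+1) = 2^n + 2^n := by rw [pow_succ]; omega
    rw [midx]
    by_cases h : i < 2^n <;> by_cases h' : j < 2^n <;> simp [h, h']
    · exact lt_trans (midx_lt n i j h h') (by omega)
    · have := midx_lt n i (j - 2^n) h (by omega); omega
    · have := midx_lt n j (i - 2^n) h' (by omega); omega
    · have := midx_lt n (j - 2^n) (i - 2^n) (by omega) (by omega); omega

lemma sg_mk {n : ℕ} (b : Bool) (x y : CD n) :
    sg b (show CD (n+1) from ((x, y) : CD n × CD n)) = ((sg b x, sg b y) : CD n × CD n) := by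
  cases b <;> rfl

lemma cdMul_e : ∀ n i j, i < 2^n → j < 2^n →
    cdMul n (cdE n i) (cdE n j) = sg (msg n i j) (cdE n (midx n i j))
  | 0, i, j, _, _ => mul_one (1 : ℝ)
  | n+1, i, j, hi, hj => by
    have hp : (2:ℕ)^(n+1) = 2^n + 2^n := by rw [pow_succ]; omega
    by_cases h : i < 2^n <;> by_cases h' : j < 2^n
    · rw [cdE_succ_lt h, cdE_succ_lt h', cdMul_pair,
        (cdMul_zero n).1, (cdMul_zero n).2, (cdMul_zero n).2,
        cdMul_e n i j h h', msg, midx, if_pos h, if_pos h, if_pos h', if_pos h',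
        cdE_succ_lt (midx_lt n i j h h'), sg_mk]
      refine Prod.ext ?_ ?_ <;> simp [sg_zero, neg_sg]
    · have hj' : j - 2^n < 2^n := by omega
      rw [cdE_succ_lt h, cdE_succ_ge h', cdMul_pair, cdConj_zero,
        (cdMul_zero n).2, (cdMul_zero n).2, (cdMul_zero n).1,
        cdConj_e n i h, cdMul_sg_left, cdMul_e n i _ h hj', sg_sg,
        msg, midx, if_pos h, if_pos h, if_neg h', if_neg h',
        cdE_succ_ge (k := 2^n + midx n i (j - 2^n)) (by omega),
        Nat.add_sub_cancel_left, sg_mk]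
      refine Prod.ext ?_ ?_ <;> simp [sg_zero, neg_sg]
    · have hi' : i - 2^n < 2^n := by omega
      rw [cdE_succ_ge h, cdE_succ_lt h', cdMul_pair, cdConj_zero,
        (cdMul_zero n).1, (cdMul_zero n).1, (cdMul_zero n).1,
        cdMul_e n j _ h' hi',
        msg, midx, if_neg h, if_neg h, if_pos h', if_pos h',
        cdE_succ_ge (k := 2^n + midx n j (i - 2^n)) (by omega),
        Nat.add_sub_cancel_left, sg_mk]
      refine Prod.ext ?_ ?_ <;> simp [sg_zero, neg_sg]
    · have hi' : i - 2^n < 2^n := by omega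
      have hj' : j - 2^n < 2^n := by omega
      rw [cdE_succ_ge h, cdE_succ_ge h', cdMul_pair, cdConj_zero,
        (cdMul_zero n).1, (cdMul_zero n).1, (cdMul_zero n).1,
        cdConj_e n _ hi', cdMul_sg_right, cdMul_e n _ _ hj' hi', sg_sg,
        msg, midx, if_neg h, if_neg h, if_neg h', if_neg h',
        cdE_succ_lt (midx_lt n _ _ hj' hi'), sg_mk]
      refine Prod.ext ?_ ?_ <;> simp [sg_zero, neg_sg]

set_option maxHeartbeats 1000000 in
lemma Ldec : ∀ i < 32, ∀ j < 32,
    ((msg 5 i j == msg 5 i (midx 5 i j)) = (msg 5 i i == msg 5 (midx 5 i i) j)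
      ∧ midx 5 i (midx 5 i j) = midx 5 (midx 5 i i) j)
    ∧ ((msg 5 i j == msg 5 (midx 5 i j) j) = (msg 5 j j == msg 5 i (midx 5 j j))
      ∧ midx 5 (midx 5 i j) j = midx 5 i (midx 5 j j))
    ∧ ((msg 5 j i == msg 5 i (midx 5 j i)) = (msg 5 i j == msg 5 (midx 5 i j) i)
      ∧ midx 5 i (midx 5 j i) = midx 5 (midx 5 i j) i) := by decide

lemma midx_jj : ∀ j < 32, midx 5 j j = 0 := by decide

lemma csg_zero : ∀ n, csg n 0 = true
  | 0 => rfl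
  | n+1 => by rw [csg, if_pos (pow_pos (by norm_num) n), csg_zero n]

lemma cdMul_one : ∀ n, (∀ x : CD n, cdMul n (cdE n 0) x = x) ∧
    (∀ x : CD n, cdMul n x (cdE n 0) = x)
  | 0 => ⟨fun x => one_mul (M := ℝ) x, fun x => mul_one (M := ℝ) x⟩
  | n+1 => by
    obtain ⟨hl, hr⟩ := cdMul_one n
    have he : cdE (n+1) 0 = ((cdE n 0, 0) : CD n × CD n) :=
      cdE_succ_lt (pow_pos (by norm_num) n)
    have hc : cdConj n (cdE n 0) = cdE n 0 := by
      rw [cdConj_e n 0 (pow_pos (by norm_num) n), csg_zero n, sg_true]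
    constructor
    · intro x
      rw [he, show x = ((x.1, x.2) : CD n × CD n) from rfl, cdMul_pair, cdConj_zero,
        (cdMul_zero n).2, (cdMul_zero n).2, hc, hl, hl, sub_zero, add_zero]
    · intro x
      rw [he, show x = ((x.1, x.2) : CD n × CD n) from rfl, cdMul_pair,
        (cdMul_zero n).1, (cdMul_zero n).2, hr, hl, sub_zero, zero_add]

-- TT-level lemmas
lemma tt_mul_def (x y : TT) : x * y = cdMul 5 x y := rfl

lemma neg_mul_tt (x y : TT) : (-x) * y = -(x * y) := (cdMul_neg 5).1 x y
lemma mul_neg_tt (x y : TT) : x * (-y) = -(x * y) := (cdMul_neg 5).2 x y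

lemma sg_mul_tt (b : Bool) (x y : TT) : sg b x * y = sg b (x * y) :=
  cdMul_sg_left 5 b x y
lemma mul_sg_tt (b : Bool) (x y : TT) : x * sg b y = sg b (x * y) :=
  cdMul_sg_right 5 b x y

lemma e_mul {i j : ℕ} (hi : i < 32) (hj : j < 32) :
    e i * e j = sg (msg 5 i j) (e (midx 5 i j)) := cdMul_e 5 i j hi hj

lemma mlt {i j : ℕ} (hi : i < 32) (hj : j < 32) : midx 5 i j < 32 := midx_lt 5 i j hi hj

lemma L1e {i j : ℕ} (hi : i < 32) (hj : j < 32) :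
    e i * (e i * e j) = (e i * e i) * e j := by
  rw [e_mul hi hj, mul_sg_tt, e_mul hi (mlt hi hj), sg_sg,
    e_mul hi hi, sg_mul_tt, e_mul (mlt hi hi) hj, sg_sg,
    ((Ldec i hi j hj).1).1, ((Ldec i hi j hj).1).2]

lemma L2e {i j : ℕ} (hi : i < 32) (hj : j < 32) :
    (e i * e j) * e j = e i * (e j * e j) := by
  rw [e_mul hi hj, sg_mul_tt, e_mul (mlt hi hj) hj, sg_sg,
    e_mul hj hj, mul_sg_tt, e_mul hi (mlt hj hj), sg_sg,
    ((Ldec i hi j hj).2.1).1, ((Ldec i hi j hj).2.1).2]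

lemma L3e {i j : ℕ} (hi : i < 32) (hj : j < 32) :
    e i * (e j * e i) = (e i * e j) * e i := by
  rw [e_mul hj hi, mul_sg_tt, e_mul hi (mlt hj hi), sg_sg,
    e_mul hi hj, sg_mul_tt, e_mul (mlt hi hj) hi, sg_sg,
    ((Ldec i hi j hj).2.2).1, ((Ldec i hi j hj).2.2).2]

lemma e_zero_mul (x : TT) : e 0 * x = x := (cdMul_one 5).1 x
lemma mul_e_zero (x : TT) : x * e 0 = x := (cdMul_one 5).2 x

lemma L4e {i j k : ℕ} (hi : i < 32) (hj : j < 32) (hk : k < 32) :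
    e i * (e j * (e j * e k)) = ((e i * e j) * e j) * e k := by
  rw [L1e hj hk, L2e hi hj, e_mul hj hj, midx_jj j hj,
    sg_mul_tt, mul_sg_tt, mul_sg_tt, sg_mul_tt, e_zero_mul, mul_e_zero]

lemma lawA : ∀ x ∈ TL, ∀ y ∈ TL, x * (x * y) = (x * x) * y := by
  rintro x ⟨i, hi, rfl | rfl⟩ y ⟨j, hj, rfl | rfl⟩ <;>
    (try simp only [neg_mul_tt, mul_neg_tt, neg_neg, neg_inj]) <;> exact L1e hi hj

lemma lawB : ∀ x ∈ TL, ∀ y ∈ TL, (x * y) * y = x * (y * y) := by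
  rintro x ⟨i, hi, rfl | rfl⟩ y ⟨j, hj, rfl | rfl⟩ <;>
    (try simp only [neg_mul_tt, mul_neg_tt, neg_neg, neg_inj]) <;> exact L2e hi hj

lemma lawC : ∀ x ∈ TL, ∀ y ∈ TL, x * (y * x) = (x * y) * x := by
  rintro x ⟨i, hi, rfl | rfl⟩ y ⟨j, hj, rfl | rfl⟩ <;>
    (try simp only [neg_mul_tt, mul_neg_tt, neg_neg, neg_inj]) <;> exact L3e hi hj

lemma lawD : ∀ x ∈ TL, ∀ y ∈ TL, ∀ z ∈ TL, x * (y * (y * z)) = ((x * y) * y) * z := by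
  rintro x ⟨i, hi, rfl | rfl⟩ y ⟨j, hj, rfl | rfl⟩ z ⟨k, hk, rfl | rfl⟩ <;>
    (try simp only [neg_mul_tt, mul_neg_tt, neg_neg, neg_inj]) <;> exact L4e hi hj hk

/-- `T_L` satisfies the alternative laws, the flexible law, and the C-loop
identity. -/
theorem stmt14 :
    ∀ x ∈ TL, ∀ y ∈ TL, ∀ z ∈ TL,
      x * (x * y) = (x * x) * y ∧ (x * y) * y = x * (y * y) ∧
      x * (y * x) = (x * y) * x ∧ x * (y * (y * z)) = ((x * y) * y) * z :=
  fun x hx y hy z hz =>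
    ⟨lawA x hx y hy, lawB x hx y hy, lawC x hx y hy, lawD x hx y hy z hz⟩
end

section
/- The algebra 𝕋 is flexible, i.e. x·(y·x) = (x·y)·x for all x, y ∈ 𝕋, and power-associative (every element generates an associative subalgebra; in particular x·(x·x) = (x·x)·x and (x·x)·(x·x) = ((x·x)·x)·x for all x ∈ 𝕋), but 𝕋 is not alternative: there exist x, y ∈ 𝕋 with x·(x·y) ≠ (x·x)·y. -/
/-- Left-iterated powers `x^n` in `𝕋`. -/
def lpow (x : TT) : ℕ → TT
  | 0 => 1
  | n + 1 => lpow x n * x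

-- structural lemmas
lemma cdadd_def (n) (x y : CD (n+1)) : x + y = (x.1 + y.1, x.2 + y.2) := rfl
lemma cdneg_def (n) (x : CD (n+1)) : -x = (-x.1, -x.2) := rfl
lemma cdsub_def (n) (x y : CD (n+1)) : x - y = (x.1 - y.1, x.2 - y.2) := rfl
lemma cdsmul_def (n) (r : ℝ) (x : CD (n+1)) : r • x = (r • x.1, r • x.2) := rfl
lemma cdzero_def (n) : (0 : CD (n+1)) = ((0 : CD n), (0 : CD n)) := rfl
lemma cdone_def (n) : (1 : CD (n+1)) = ((1 : CD n), (0 : CD n)) := rfl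
lemma cdmul_def (n) (x y : CD (n+1)) : cdMul (n+1) x y =
    (cdMul n x.1 y.1 - cdMul n y.2 (cdConj n x.2),
     cdMul n (cdConj n x.1) y.2 + cdMul n y.1 x.2) := rfl
lemma cdconj_def (n) (x : CD (n+1)) : cdConj (n+1) x = (cdConj n x.1, -x.2) := rfl
def oR (x : CD 0) : ℝ := x
lemma cdmul0 (x y : CD 0) : cdMul 0 x y = oR x * oR y := rfl
lemma cdext (n) {x y : CD (n+1)} (h1 : x.1 = y.1) (h2 : x.2 = y.2) : x = y :=
  Prod.ext h1 h2

-- conjugation basics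
lemma cdconj_add : ∀ n (x y : CD n), cdConj n (x + y) = cdConj n x + cdConj n y
  | 0, x, y => rfl
  | n+1, x, y => by
      erw [cdadd_def, cdconj_def, cdconj_def, cdconj_def, cdadd_def]
      exact cdext n (by dsimp only; rw [cdconj_add n]) (by dsimp only; rw [neg_add])

lemma cdconj_smul : ∀ n (r : ℝ) (x : CD n), cdConj n (r • x) = r • cdConj n x
  | 0, r, x => rfl
  | n+1, r, x => by
      erw [cdsmul_def, cdconj_def, cdconj_def, cdsmul_def]
      exact cdext n (by dsimp only; rw [cdconj_smul n]) (by dsimp only; rw [smul_neg])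

lemma cdconj_conj : ∀ n (x : CD n), cdConj n (cdConj n x) = x
  | 0, x => rfl
  | n+1, x => by
      rw [cdconj_def, cdconj_def]
      exact cdext n (by dsimp only; rw [cdconj_conj n]) (by dsimp only; rw [neg_neg])

lemma cdconj_zero : ∀ n, cdConj n 0 = 0
  | 0 => rfl
  | n+1 => by erw [cdzero_def, cdconj_def]; exact cdext n (by dsimp only; rw [cdconj_zero n]) (by dsimp only; rw [neg_zero])

lemma cdconj_neg (n) (x : CD n) : cdConj n (-x) = -cdConj n x := by
  have := cdconj_smul n (-1) x
  rwa [neg_one_smul, neg_one_smul] at this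

lemma cdconj_sub (n) (x y : CD n) : cdConj n (x - y) = cdConj n x - cdConj n y := by
  rw [sub_eq_add_neg, cdconj_add, cdconj_neg, ← sub_eq_add_neg]

lemma cdconj_one : ∀ n, cdConj n 1 = 1
  | 0 => rfl
  | n+1 => by
      erw [cdone_def, cdconj_def]
      exact cdext n (by dsimp only; rw [cdconj_one n]) (by dsimp only; rw [neg_zero])

-- distributivity
lemma cd_distrib : ∀ n, (∀ x y z : CD n, cdMul n x (y + z) = cdMul n x y + cdMul n x z)
    ∧ (∀ x y z : CD n, cdMul n (x + y) z = cdMul n x z + cdMul n y z)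
  | 0 => ⟨fun x y z => mul_add (oR x) (oR y) (oR z), fun x y z => add_mul (oR x) (oR y) (oR z)⟩
  | n+1 => by
      obtain ⟨ma, am⟩ := cd_distrib n
      constructor
      · intro x y z
        erw [cdmul_def, cdmul_def, cdmul_def, cdadd_def, cdadd_def]
        refine cdext n ?_ ?_ <;> dsimp only
        · rw [ma, am]; abel
        · rw [ma, am]; abel
      · intro x y z
        erw [cdmul_def, cdmul_def, cdmul_def, cdadd_def, cdadd_def]
        refine cdext n ?_ ?_ <;> dsimp only
        · rw [am, cdconj_add, ma]; abel
        · rw [cdconj_add, am, ma]; abel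

lemma cdmul_add (n) (x y z : CD n) : cdMul n x (y + z) = cdMul n x y + cdMul n x z :=
  (cd_distrib n).1 x y z
lemma cdadd_mul (n) (x y z : CD n) : cdMul n (x + y) z = cdMul n x z + cdMul n y z :=
  (cd_distrib n).2 x y z

-- scalars
lemma cd_smul : ∀ n, (∀ (r : ℝ) (x y : CD n), cdMul n (r • x) y = r • cdMul n x y)
    ∧ (∀ (r : ℝ) (x y : CD n), cdMul n x (r • y) = r • cdMul n x y)
  | 0 => ⟨fun r x y => by show (r * oR x) * oR y = r * (oR x * oR y); ring,
          fun r x y => by show oR x * (r * oR y) = r * (oR x * oR y); ring⟩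
  | n+1 => by
      obtain ⟨sm, ms⟩ := cd_smul n
      constructor
      · intro r x y
        erw [cdsmul_def, cdmul_def, cdmul_def, cdsmul_def]
        refine cdext n ?_ ?_ <;> dsimp only
        · rw [sm, cdconj_smul, ms, smul_sub]
        · rw [cdconj_smul, sm, ms, smul_add]
      · intro r x y
        erw [cdsmul_def, cdmul_def, cdmul_def, cdsmul_def]
        refine cdext n ?_ ?_ <;> dsimp only
        · rw [sm, ms, smul_sub]
        · rw [ms, sm, smul_add]

lemma cdsmul_mul (n) (r : ℝ) (x y : CD n) : cdMul n (r • x) y = r • cdMul n x y :=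
  (cd_smul n).1 r x y
lemma cdmul_smul (n) (r : ℝ) (x y : CD n) : cdMul n x (r • y) = r • cdMul n x y :=
  (cd_smul n).2 r x y

lemma cdzero_mul (n) (y : CD n) : cdMul n 0 y = 0 := by
  have h := cdsmul_mul n 0 0 y
  rwa [zero_smul, zero_smul] at h
lemma cdmul_zero (n) (x : CD n) : cdMul n x 0 = 0 := by
  have h := cdmul_smul n 0 x 0
  rwa [zero_smul, zero_smul] at h
lemma cdneg_mul (n) (x y : CD n) : cdMul n (-x) y = -cdMul n x y := by
  have h := cdsmul_mul n (-1) x y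
  rwa [neg_one_smul, neg_one_smul] at h
lemma cdmul_neg (n) (x y : CD n) : cdMul n x (-y) = -cdMul n x y := by
  have h := cdmul_smul n (-1) x y
  rwa [neg_one_smul, neg_one_smul] at h
lemma cdsub_mul (n) (x y z : CD n) : cdMul n (x - y) z = cdMul n x z - cdMul n y z := by
  rw [sub_eq_add_neg, cdadd_mul, cdneg_mul, ← sub_eq_add_neg]
lemma cdmul_sub (n) (x y z : CD n) : cdMul n x (y - z) = cdMul n x y - cdMul n x z := by
  rw [sub_eq_add_neg, cdmul_add, cdmul_neg, ← sub_eq_add_neg]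

-- unit
lemma cd_one : ∀ n, (∀ x : CD n, cdMul n 1 x = x) ∧ (∀ x : CD n, cdMul n x 1 = x)
  | 0 => ⟨fun x => one_mul (oR x), fun x => mul_one (oR x)⟩
  | n+1 => by
      obtain ⟨om, mo⟩ := cd_one n
      constructor
      · intro x
        erw [cdone_def, cdmul_def]
        refine cdext n ?_ ?_ <;> dsimp only
        · rw [om, cdconj_zero, cdmul_zero, sub_zero]
        · rw [cdconj_one, om, cdmul_zero, add_zero]
      · intro x
        erw [cdone_def, cdmul_def]
        refine cdext n ?_ ?_ <;> dsimp only
        · rw [mo, cdzero_mul, sub_zero]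
        · rw [cdmul_zero, om, zero_add]

lemma cdone_mul (n) (x : CD n) : cdMul n 1 x = x := (cd_one n).1 x
lemma cdmul_one (n) (x : CD n) : cdMul n x 1 = x := (cd_one n).2 x
lemma cdsmul_one_mul (n) (r : ℝ) (y : CD n) : cdMul n (r • 1) y = r • y := by
  rw [cdsmul_mul, cdone_mul]
lemma cdmul_smul_one (n) (r : ℝ) (x : CD n) : cdMul n x (r • 1) = r • x := by
  rw [cdmul_smul, cdmul_one]

-- conj is an anti-homomorphism
lemma cdconj_mul : ∀ n (x y : CD n), cdConj n (cdMul n x y) = cdMul n (cdConj n y) (cdConj n x)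
  | 0, x, y => by show oR x * oR y = oR y * oR x; ring
  | n+1, x, y => by
      erw [cdmul_def, cdconj_def, cdconj_def, cdconj_def, cdmul_def]
      refine cdext n ?_ ?_ <;> dsimp only
      · rw [cdconj_sub, cdconj_mul n, cdconj_mul n, cdconj_conj, cdconj_neg, cdneg_mul,
          cdmul_neg, neg_neg]
      · rw [cdconj_conj, cdmul_neg, cdmul_neg, neg_add]
        abel

-- trace and norm
def cdT : ∀ n, CD n → ℝ
  | 0, x => oR x + oR x
  | n+1, x => cdT n x.1
def cdQ : ∀ n, CD n → ℝ
  | 0, x => oR x * oR x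
  | n+1, x => cdQ n x.1 + cdQ n x.2

lemma cdT_succ (n) (x : CD (n+1)) : cdT (n+1) x = cdT n x.1 := rfl
lemma cdQ_succ (n) (x : CD (n+1)) : cdQ (n+1) x = cdQ n x.1 + cdQ n x.2 := rfl

lemma cdT_add : ∀ n (x y : CD n), cdT n (x + y) = cdT n x + cdT n y
  | 0, x, y => by show (oR x + oR y) + (oR x + oR y) = (oR x + oR x) + (oR y + oR y); ring
  | n+1, x, y => by rw [cdT_succ, cdadd_def, cdT_succ, cdT_succ]; exact cdT_add n x.1 y.1

lemma cdconj_eq : ∀ n (x : CD n), cdConj n x = cdT n x • 1 - x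
  | 0, x => by show oR x = (oR x + oR x) • (1:ℝ) - oR x; rw [smul_eq_mul]; ring
  | n+1, x => by
      erw [cdconj_def, cdT_succ, cdone_def, cdsmul_def, cdsub_def]
      refine cdext n ?_ ?_ <;> dsimp only
      · exact cdconj_eq n x.1
      · rw [smul_zero, zero_sub]

-- square identity
lemma cdsq : ∀ n (x : CD n), cdMul n x x = cdT n x • x - cdQ n x • 1
  | 0, x => by show oR x * oR x = (oR x + oR x) • oR x - (oR x * oR x) • (1:ℝ); rw [smul_eq_mul, smul_eq_mul]; ring
  | n+1, x => by
      erw [cdmul_def, cdT_succ, cdQ_succ, cdsmul_def, cdone_def, cdsmul_def, cdsub_def]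
      refine cdext n ?_ ?_ <;> dsimp only
      · have hb : cdMul n x.2 (cdConj n x.2) = cdQ n x.2 • 1 := by
          rw [cdconj_eq, cdmul_sub, cdmul_smul_one, cdsq n, sub_sub_cancel]
        rw [hb, cdsq n x.1]
        have : (cdQ n x.1 + cdQ n x.2) • (1 : CD n) = cdQ n x.1 • 1 + cdQ n x.2 • 1 := add_smul _ _ _
        rw [this]
        abel
      · rw [cdconj_eq, cdsub_mul, cdsmul_one_mul]
        rw [smul_zero]
        abel

-- polarized square
lemma cdaddsq (n) (b d : CD n) : cdMul n b d + cdMul n d b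
    = cdT n d • b + cdT n b • d + (cdQ n b + cdQ n d - cdQ n (b + d)) • 1 := by
  have h := cdsq n (b + d)
  rw [cdmul_add, cdadd_mul, cdadd_mul, cdsq n b, cdsq n d, cdT_add] at h
  linear_combination (norm := module) h

-- linearized flexibility
variable {n : ℕ}

lemma cdlin (n : ℕ) (hf : ∀ x y : CD n, cdMul n x (cdMul n y x) = cdMul n (cdMul n x y) x) (x y z : CD n) :
    cdMul n x (cdMul n y z) + cdMul n z (cdMul n y x)
      = cdMul n (cdMul n x y) z + cdMul n (cdMul n z y) x := by
  have h := hf (x + z) y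
  simp only [cdmul_add, cdadd_mul] at h
  linear_combination (norm := module) h - hf x y - hf z y

lemma cdII (n : ℕ) (hf : ∀ x y : CD n, cdMul n x (cdMul n y x) = cdMul n (cdMul n x y) x) (u b : CD n) :
    cdMul n (cdMul n u b) (cdConj n b) = cdMul n b (cdMul n (cdConj n b) u) := by
  have hlin := cdlin n hf u b b
  have h5 : cdMul n u (cdMul n b b) = cdT n b • cdMul n u b - cdQ n b • u := by
    rw [cdsq n b, cdmul_sub, cdmul_smul, cdmul_smul_one]
  have h6 : cdMul n (cdMul n b b) u = cdT n b • cdMul n b u - cdQ n b • u := by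
    rw [cdsq n b, cdsub_mul, cdsmul_mul, cdsmul_one_mul]
  rw [cdconj_eq n b]
  simp only [cdmul_add, cdadd_mul, cdmul_sub, cdsub_mul, cdmul_smul, cdsmul_mul,
    cdone_mul, cdmul_one]
  linear_combination (norm := module) hlin - h5 + h6

lemma cdI (n : ℕ) (hf : ∀ x y : CD n, cdMul n x (cdMul n y x) = cdMul n (cdMul n x y) x) (a b d : CD n) :
    cdMul n a (cdMul n b (cdConj n d)) + cdMul n (cdMul n a d) (cdConj n b)
      = cdMul n (cdMul n d (cdConj n b)) a + cdMul n b (cdMul n (cdConj n d) a) := by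
  have hlin := cdlin n hf a d b
  have h3 : cdMul n a (cdMul n b d) + cdMul n a (cdMul n d b)
      = cdT n d • cdMul n a b + cdT n b • cdMul n a d
        + (cdQ n b + cdQ n d - cdQ n (b + d)) • a := by
    have := congrArg (fun w => cdMul n a w) (cdaddsq n b d)
    beta_reduce at this
    rwa [cdmul_add, cdmul_add, cdmul_add, cdmul_smul, cdmul_smul, cdmul_smul_one] at this
  have h4 : cdMul n (cdMul n b d) a + cdMul n (cdMul n d b) a
      = cdT n d • cdMul n b a + cdT n b • cdMul n d a
        + (cdQ n b + cdQ n d - cdQ n (b + d)) • a := by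
    have := congrArg (fun w => cdMul n w a) (cdaddsq n b d)
    beta_reduce at this
    rwa [cdadd_mul, cdadd_mul, cdadd_mul, cdsmul_mul, cdsmul_mul, cdsmul_one_mul] at this
  rw [cdconj_eq n d, cdconj_eq n b]
  simp only [cdmul_add, cdadd_mul, cdmul_sub, cdsub_mul, cdmul_smul, cdsmul_mul,
    cdone_mul, cdmul_one]
  linear_combination (norm := module) hlin - h3 + h4

-- flexibility
lemma cdflex : ∀ n (x y : CD n), cdMul n x (cdMul n y x) = cdMul n (cdMul n x y) x
  | 0, x, y => by show oR x * (oR y * oR x) = (oR x * oR y) * oR x; ring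
  | n+1, x, y => by
      have hf := cdflex n
      erw [cdmul_def n y x, cdmul_def n x y, cdmul_def, cdmul_def]
      refine cdext n ?_ ?_ <;> dsimp only
      · -- first components
        simp only [cdconj_add, cdconj_sub, cdconj_mul, cdconj_conj, cdmul_add, cdadd_mul,
          cdmul_sub, cdsub_mul]
        have h1 := hf x.1 y.1
        have h2 := cdII n hf (cdConj n y.1) x.2
        have h3 := cdI n hf x.1 x.2 y.2
        linear_combination (norm := module) h1 - h2 - h3
      · -- second components
        simp only [cdconj_add, cdconj_sub, cdconj_mul, cdconj_conj, cdmul_add, cdadd_mul,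
          cdmul_sub, cdsub_mul]
        rw [cdconj_eq n x.1, cdconj_eq n y.1]
        simp only [cdmul_add, cdadd_mul, cdmul_sub, cdsub_mul, cdmul_smul, cdsmul_mul,
          cdone_mul, cdmul_one]
        module

-- quadratic subalgebra ℝ[X]/(X² - tX + q)
def pmul (t q : ℝ) (u v : ℝ × ℝ) : ℝ × ℝ :=
  (u.1 * v.1 - q * (u.2 * v.2), u.1 * v.2 + u.2 * v.1 + t * (u.2 * v.2))
noncomputable def phi (x : TT) (u : ℝ × ℝ) : TT := u.1 • 1 + u.2 • x
def pw (t q : ℝ) : ℕ → ℝ × ℝ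
  | 0 => (1, 0)
  | k + 1 => pmul t q (pw t q k) (0, 1)

lemma phi_mul (x : TT) (u v : ℝ × ℝ) :
    cdMul 5 (phi x u) (phi x v) = phi x (pmul (cdT 5 x) (cdQ 5 x) u v) := by
  unfold phi pmul
  simp only [cdmul_add, cdadd_mul, cdmul_smul, cdsmul_mul, cdone_mul, cdmul_one]
  rw [cdsq 5 x]
  module

lemma pmul_assoc (t q : ℝ) (u v w : ℝ × ℝ) :
    pmul t q (pmul t q u v) w = pmul t q u (pmul t q v w) := by
  unfold pmul
  exact Prod.ext (by dsimp only; ring) (by dsimp only; ring)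

lemma pmul_one_right (t q : ℝ) (u : ℝ × ℝ) : pmul t q u (1, 0) = u := by
  unfold pmul
  exact Prod.ext (by dsimp only; ring) (by dsimp only; ring)

lemma lpow_phi (x : TT) : ∀ k, lpow x k = phi x (pw (cdT 5 x) (cdQ 5 x) k)
  | 0 => by
      show (1 : TT) = phi x (1, 0)
      unfold phi
      dsimp only
      rw [one_smul, zero_smul, add_zero]
  | k + 1 => by
      have hx : x = phi x (0, 1) := by
        unfold phi; dsimp only; rw [zero_smul, one_smul, zero_add]
      show lpow x k * x = _
      rw [lpow_phi x k]
      show cdMul 5 (phi x (pw (cdT 5 x) (cdQ 5 x) k)) x = _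
      rw [show pw (cdT 5 x) (cdQ 5 x) (k+1) = pmul (cdT 5 x) (cdQ 5 x) (pw (cdT 5 x) (cdQ 5 x) k) (0,1) from rfl]
      rw [← phi_mul, ← hx]

lemma pw_add (t q : ℝ) (a : ℕ) : ∀ b, pmul t q (pw t q a) (pw t q b) = pw t q (a + b)
  | 0 => by rw [show pw t q 0 = ((1:ℝ), (0:ℝ)) from rfl, pmul_one_right, Nat.add_zero]
  | b + 1 => by
      rw [show pw t q (b+1) = pmul t q (pw t q b) (0,1) from rfl,
        ← pmul_assoc, pw_add t q a b]
      rfl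

lemma lpow_add (x : TT) (a b : ℕ) : lpow x a * lpow x b = lpow x (a + b) := by
  rw [lpow_phi, lpow_phi, lpow_phi]
  show cdMul 5 _ _ = _
  rw [phi_mul, pw_add]

lemma mul1 (x y : CD 1) : cdMul 1 x y =
    (cdMul 0 x.1 y.1 - cdMul 0 y.2 (cdConj 0 x.2),
     cdMul 0 (cdConj 0 x.1) y.2 + cdMul 0 y.1 x.2) := rfl
lemma conj1 (x : CD 1) : cdConj 1 x = (cdConj 0 x.1, -x.2) := rfl
lemma add1 (x y : CD 1) : x + y = (x.1 + y.1, x.2 + y.2) := rfl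
lemma sub1 (x y : CD 1) : x - y = (x.1 - y.1, x.2 - y.2) := rfl
lemma neg1 (x : CD 1) : -x = (-x.1, -x.2) := rfl
lemma mul2 (x y : CD 2) : cdMul 2 x y =
    (cdMul 1 x.1 y.1 - cdMul 1 y.2 (cdConj 1 x.2),
     cdMul 1 (cdConj 1 x.1) y.2 + cdMul 1 y.1 x.2) := rfl
lemma conj2 (x : CD 2) : cdConj 2 x = (cdConj 1 x.1, -x.2) := rfl
lemma add2 (x y : CD 2) : x + y = (x.1 + y.1, x.2 + y.2) := rfl
lemma sub2 (x y : CD 2) : x - y = (x.1 - y.1, x.2 - y.2) := rfl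
lemma neg2 (x : CD 2) : -x = (-x.1, -x.2) := rfl
lemma mul3 (x y : CD 3) : cdMul 3 x y =
    (cdMul 2 x.1 y.1 - cdMul 2 y.2 (cdConj 2 x.2),
     cdMul 2 (cdConj 2 x.1) y.2 + cdMul 2 y.1 x.2) := rfl
lemma conj3 (x : CD 3) : cdConj 3 x = (cdConj 2 x.1, -x.2) := rfl
lemma add3 (x y : CD 3) : x + y = (x.1 + y.1, x.2 + y.2) := rfl
lemma sub3 (x y : CD 3) : x - y = (x.1 - y.1, x.2 - y.2) := rfl
lemma neg3 (x : CD 3) : -x = (-x.1, -x.2) := rfl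
lemma mul4 (x y : CD 4) : cdMul 4 x y =
    (cdMul 3 x.1 y.1 - cdMul 3 y.2 (cdConj 3 x.2),
     cdMul 3 (cdConj 3 x.1) y.2 + cdMul 3 y.1 x.2) := rfl
lemma conj4 (x : CD 4) : cdConj 4 x = (cdConj 3 x.1, -x.2) := rfl
lemma add4 (x y : CD 4) : x + y = (x.1 + y.1, x.2 + y.2) := rfl
lemma sub4 (x y : CD 4) : x - y = (x.1 - y.1, x.2 - y.2) := rfl
lemma neg4 (x : CD 4) : -x = (-x.1, -x.2) := rfl
lemma mul5 (x y : CD 5) : cdMul 5 x y =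
    (cdMul 4 x.1 y.1 - cdMul 4 y.2 (cdConj 4 x.2),
     cdMul 4 (cdConj 4 x.1) y.2 + cdMul 4 y.1 x.2) := rfl
lemma conj5 (x : CD 5) : cdConj 5 x = (cdConj 4 x.1, -x.2) := rfl
lemma add5 (x y : CD 5) : x + y = (x.1 + y.1, x.2 + y.2) := rfl
lemma sub5 (x y : CD 5) : x - y = (x.1 - y.1, x.2 - y.2) := rfl
lemma neg5 (x : CD 5) : -x = (-x.1, -x.2) := rfl
lemma conj0' (x : CD 0) : cdConj 0 x = x := rfl
def toR (x : CD 0) : ℝ := x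
lemma toR_add (x y : CD 0) : toR (x + y) = toR x + toR y := rfl
lemma toR_sub (x y : CD 0) : toR (x - y) = toR x - toR y := rfl
lemma toR_neg (x : CD 0) : toR (-x) = -toR x := rfl
lemma toR_cdMul (x y : CD 0) : toR (cdMul 0 x y) = toR x * toR y := rfl
lemma toR_mul (x y : CD 0) : toR (x * y) = toR x * toR y := rfl
lemma toR_zero : toR 0 = (0:ℝ) := rfl
noncomputable def XW : TT := (((((0, (1:ℝ)), (0, 0)), ((0, 0), (0, 0))), (((0, 0), ((1:ℝ), 0)), ((0, 0), (0, 0)))), ((((0, 0), (0, 0)), ((0, 0), (0, 0))), (((0, 0), (0, 0)), ((0, 0), (0, 0)))))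
noncomputable def YW : TT := (((((0, 0), (0, 0)), (((1:ℝ), 0), (0, 0))), (((0, 0), (0, 0)), ((0, 0), (0, 0)))), ((((0, 0), (0, 0)), ((0, 0), (0, 0))), (((0, 0), (0, 0)), ((0, 0), (0, 0)))))
def mk (n : ℕ) (a b : CD n) : CD (n+1) := (a, b)
lemma mk_mul (n : ℕ) (a b c d : CD n) : cdMul (n+1) (mk n a b) (mk n c d) =
    mk n (cdMul n a c - cdMul n d (cdConj n b)) (cdMul n (cdConj n a) d + cdMul n c b) := rfl
lemma mk_conj (n : ℕ) (a b : CD n) : cdConj (n+1) (mk n a b) = mk n (cdConj n a) (-b) := rfl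
lemma mk_add (n : ℕ) (a b c d : CD n) : mk n a b + mk n c d = mk n (a + c) (b + d) := rfl
lemma mk_sub (n : ℕ) (a b c d : CD n) : mk n a b - mk n c d = mk n (a - c) (b - d) := rfl
lemma mk_neg (n : ℕ) (a b : CD n) : -mk n a b = mk n (-a) (-b) := rfl
lemma mk_fst (n : ℕ) (a b : CD n) : Prod.fst (α := CD n) (β := CD n) (mk n a b) = a := rfl
lemma mk_snd (n : ℕ) (a b : CD n) : Prod.snd (α := CD n) (β := CD n) (mk n a b) = b := rfl
lemma zero_fst (n : ℕ) : Prod.fst (α := CD n) (β := CD n) (0 : CD (n+1)) = 0 := rfl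
lemma zero_snd (n : ℕ) : Prod.snd (α := CD n) (β := CD n) (0 : CD (n+1)) = 0 := rfl
lemma mk_mul0 (a b c d : CD 0) : cdMul 1 (mk 0 a b) (mk 0 c d) =
    mk 0 (cdMul 0 a c - cdMul 0 d (cdConj 0 b)) (cdMul 0 (cdConj 0 a) d + cdMul 0 c b) := rfl
lemma mk_conj0 (a b : CD 0) : cdConj 1 (mk 0 a b) = mk 0 (cdConj 0 a) (-b) := rfl
lemma mk_add0 (a b c d : CD 0) : (mk 0 a b : CD 1) + mk 0 c d = mk 0 (a + c) (b + d) := rfl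
lemma mk_sub0 (a b c d : CD 0) : (mk 0 a b : CD 1) - mk 0 c d = mk 0 (a - c) (b - d) := rfl
lemma mk_neg0 (a b : CD 0) : -(mk 0 a b : CD 1) = mk 0 (-a) (-b) := rfl
lemma zero_fst0 : Prod.fst (α := CD 0) (β := CD 0) (0 : CD 1) = 0 := rfl
lemma zero_snd0 : Prod.snd (α := CD 0) (β := CD 0) (0 : CD 1) = 0 := rfl
lemma toR_one : toR 1 = (1:ℝ) := rfl
lemma XW_eq : XW = mk 4 (mk 3 (mk 2 (mk 1 (mk 0 0 (1 : CD 0)) 0) 0) (mk 2 (mk 1 0 (mk 0 (1 : CD 0) 0)) 0)) 0 := rfl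
lemma YW_eq : YW = mk 4 (mk 3 (mk 2 0 (mk 1 (mk 0 (1 : CD 0) 0) 0)) 0) 0 := rfl
set_option maxRecDepth 1000000 in
set_option maxHeartbeats 2000000 in
lemma witness : cdMul 5 XW (cdMul 5 XW YW) ≠ cdMul 5 (cdMul 5 XW XW) YW := by
  intro h
  have h15 := congrArg (fun z : TT => toR z.1.2.2.2.2) h
  simp only [XW_eq, YW_eq, mk_mul, mk_conj, mk_add, mk_sub, mk_neg, mk_fst, mk_snd,
    zero_fst, zero_snd, mk_mul0, mk_conj0, mk_add0, mk_sub0, mk_neg0, zero_fst0, zero_snd0, cdmul_zero, cdzero_mul, cdconj_zero, add_zero, zero_add, sub_zero,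
    zero_sub, neg_zero, conj0', toR_add, toR_sub, toR_neg, toR_cdMul, toR_zero, toR_one] at h15
  norm_num at h15



/-- `𝕋` is flexible and power-associative (powers multiply by addition of exponents;
in particular `x(xx) = (xx)x` and `(xx)(xx) = ((xx)x)x`), but not alternative. -/
theorem stmt18 :
    (∀ x y : TT, x * (y * x) = (x * y) * x) ∧
    (∀ (x : TT) (a b : ℕ), lpow x a * lpow x b = lpow x (a + b)) ∧
    (∀ x : TT, x * (x * x) = (x * x) * x ∧
      (x * x) * (x * x) = ((x * x) * x) * x) ∧
    (∃ x y : TT, x * (x * y) ≠ (x * x) * y) := by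
  refine ⟨fun x y => cdflex 5 x y, lpow_add, fun x => ?_, ⟨XW, YW, witness⟩⟩
  have l1 : lpow x 1 = x := by
    show (1 : TT) * x = x
    exact cdone_mul 5 x
  have l2 : lpow x 2 = x * x := by
    show lpow x 1 * x = x * x
    rw [l1]
  have l3 : lpow x 3 = (x * x) * x := by
    show lpow x 2 * x = _
    rw [l2]
  have l4 : lpow x 4 = ((x * x) * x) * x := by
    show lpow x 3 * x = _
    rw [l3]
  constructor
  · calc x * (x * x) = lpow x 1 * lpow x 2 := by rw [l1, l2]
      _ = lpow x 3 := lpow_add x 1 2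
      _ = (x * x) * x := l3
  · calc (x * x) * (x * x) = lpow x 2 * lpow x 2 := by rw [l2]
      _ = lpow x 4 := lpow_add x 2 2
      _ = ((x * x) * x) * x := l4
end
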